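/- Let f₁,…,f_n ∈ ℂ[x₁,…,x_n], let I = ⟨f₁,…,f_n⟩, let m = x₁x₂⋯x_n, fix i ∈ {1,…,n}, and let α ∈ ℂ with α ≠ 0. The following are equivalent: (1) the set of common zeros of f₁,…,f_n in (ℂ*)ⁿ (points with all coordinates nonzero) is nonempty and every such zero x satisfies x_i = α; (2) x_i − α ∈ √(I : m^∞) and √(I : m^∞) ≠ ⟨1⟩; (3) x_i − α generates the ideal √((I : m^∞) ∩ ℂ[x_i]) of the univariate polynomial ring ℂ[x_i]. -/

import Mathlib

open MvPolynomial

/-- For `α ∈ ℂ*`, the following are equivalent: (1) the common zeros of `f₁,…,fₙ` in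
`(ℂ*)ⁿ` are nonempty and all have `i`-th coordinate `α`; (2) `xᵢ - α ∈ √(I : m^∞)` and
`√(I : m^∞) ≠ ⟨1⟩`; (3) `xᵢ - α` generates the radical of the elimination ideal
`(I : m^∞) ∩ ℂ[xᵢ]`. -/
theorem stmt_13 (n : ℕ) (f : Fin n → MvPolynomial (Fin n) ℂ) (i : Fin n)
    (I : Ideal (MvPolynomial (Fin n) ℂ)) (hI : I = Ideal.span (Set.range f))
    (m : MvPolynomial (Fin n) ℂ) (hm : m = ∏ j, X j)
    (sat : Ideal (MvPolynomial (Fin n) ℂ))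
    (hsat : ∀ g, g ∈ sat ↔ ∃ k : ℕ, m ^ k * g ∈ I)
    (α : ℂ) (hα : α ≠ 0) :
    (((∃ x : Fin n → ℂ, (∀ j, x j ≠ 0) ∧ ∀ j, eval x (f j) = 0) ∧
        ∀ x : Fin n → ℂ, (∀ j, x j ≠ 0) → (∀ j, eval x (f j) = 0) → x i = α)
      ↔ ((X i - C α) ∈ sat.radical ∧ sat.radical ≠ ⊤)) ∧
    (((X i - C α) ∈ sat.radical ∧ sat.radical ≠ ⊤)
      ↔ (Ideal.comap (Polynomial.aeval (X i : MvPolynomial (Fin n) ℂ)) sat).radical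
          = Ideal.span {Polynomial.X - Polynomial.C α}) := by
  have hfI : ∀ j, f j ∈ I := fun j => hI ▸ Ideal.subset_span ⟨j, rfl⟩
  have hIz : ∀ (x : Fin n → ℂ), (∀ j, eval x (f j) = 0) → ∀ g ∈ I, eval x g = 0 := by
    intro x hx g hg
    rw [hI] at hg
    have hle : Ideal.span (Set.range f) ≤ RingHom.ker (eval x) := by
      rw [Ideal.span_le]
      rintro _ ⟨j, rfl⟩
      exact hx j
    exact hle hg
  have hmx : ∀ (x : Fin n → ℂ), (∀ j, x j ≠ 0) → eval x m ≠ 0 := by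
    intro x hx
    rw [hm, map_prod]
    simp only [eval_X]
    exact Finset.prod_ne_zero_iff.mpr fun j _ => hx j
  have claimA : ∀ g : MvPolynomial (Fin n) ℂ, g ∈ sat.radical ↔
      ∀ x : Fin n → ℂ, (∀ j, x j ≠ 0) → (∀ j, eval x (f j) = 0) → eval x g = 0 := by
    intro g
    constructor
    · rintro ⟨k, hk⟩ x hx hfx
      obtain ⟨j, hj⟩ := (hsat _).1 hk
      have h0 : eval x (m ^ j * g ^ k) = 0 := hIz x hfx _ hj
      rw [map_mul, map_pow, map_pow] at h0
      by_contra hg0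
      exact mul_ne_zero (pow_ne_zero _ (hmx x hx)) (pow_ne_zero _ hg0) h0
    · intro h
      have hmg : m * g ∈ I.radical := by
        rw [← vanishingIdeal_zeroLocus_eq_radical (K := ℂ)]
        intro x hxz
        change eval x (m * g) = 0
        rw [map_mul]
        by_cases hx : ∀ j, x j ≠ 0
        · rw [h x hx fun j => hxz _ (hfI j), mul_zero]
        · push_neg at hx
          obtain ⟨j, hj⟩ := hx
          have hm0 : eval x m = 0 := by
            rw [hm, map_prod]
            exact Finset.prod_eq_zero (Finset.mem_univ j) (by simp [hj])
          rw [hm0, zero_mul]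
      obtain ⟨k, hk⟩ := hmg
      rw [mul_pow] at hk
      exact ⟨k, (hsat _).2 ⟨k, hk⟩⟩
  constructor
  · constructor
    · rintro ⟨⟨x0, hx0, hfx0⟩, huniq⟩
      refine ⟨(claimA _).2 ?_, ?_⟩
      · intro x hx hfx
        rw [map_sub, eval_X, eval_C, huniq x hx hfx, sub_self]
      · intro htop
        have h1 : (1 : MvPolynomial (Fin n) ℂ) ∈ sat.radical := htop ▸ Submodule.mem_top
        have := (claimA 1).1 h1 x0 hx0 hfx0
        simp at this
    · rintro ⟨hX, hne⟩
      have huniq : ∀ x : Fin n → ℂ, (∀ j, x j ≠ 0) → (∀ j, eval x (f j) = 0) → x i = α := by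
        intro x hx hfx
        have hv := (claimA _).1 hX x hx hfx
        rw [map_sub, eval_X, eval_C, sub_eq_zero] at hv
        exact hv
      refine ⟨?_, huniq⟩
      by_contra hne2
      push_neg at hne2
      apply hne
      rw [Ideal.eq_top_iff_one]
      refine (claimA 1).2 ?_
      intro x hx hfx
      obtain ⟨j, hj⟩ := hne2 x hx
      exact absurd (hfx j) hj
  · have hmax : (Ideal.span {Polynomial.X - Polynomial.C α} :
        Ideal (Polynomial ℂ)).IsMaximal :=
      PrincipalIdealRing.isMaximal_of_irreducible (Polynomial.irreducible_X_sub_C α)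
    have hφX : Polynomial.aeval (R := ℂ) (X i : MvPolynomial (Fin n) ℂ)
        (Polynomial.X - Polynomial.C α) = X i - C α := by
      rw [map_sub, Polynomial.aeval_X, Polynomial.aeval_C, MvPolynomial.algebraMap_eq]
    have hrad : (Ideal.comap (Polynomial.aeval (R := ℂ) (X i : MvPolynomial (Fin n) ℂ)) sat).radical
        = Ideal.comap (Polynomial.aeval (R := ℂ) (X i : MvPolynomial (Fin n) ℂ)) sat.radical :=
      (Ideal.comap_radical _ sat).symm
    constructor
    · rintro ⟨hX, hne⟩
      rw [hrad]
      refine (hmax.eq_of_le ?_ ?_).symm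
      · intro htop
        apply hne
        rw [Ideal.eq_top_iff_one]
        have h1 : (1 : Polynomial ℂ) ∈
            Ideal.comap (Polynomial.aeval (R := ℂ) (X i : MvPolynomial (Fin n) ℂ)) sat.radical :=
          htop ▸ Submodule.mem_top
        simpa using h1
      · rw [Ideal.span_le, Set.singleton_subset_iff]
        show Polynomial.aeval (R := ℂ) (X i : MvPolynomial (Fin n) ℂ)
          (Polynomial.X - Polynomial.C α) ∈ sat.radical
        rw [hφX]
        exact hX
    · intro heq
      rw [hrad] at heq
      have hXmem : Polynomial.X - Polynomial.C α ∈
          Ideal.comap (Polynomial.aeval (R := ℂ) (X i : MvPolynomial (Fin n) ℂ)) sat.radical := by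
        rw [heq]
        exact Ideal.subset_span rfl
      refine ⟨by rw [← hφX]; exact hXmem, ?_⟩
      intro htop
      apply hmax.ne_top
      rw [← heq, htop, Ideal.comap_top]
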